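/- arXiv:2007.03984 — 5 statements merged into one kernel-verified Lean document; each statement's English description precedes it below -/
import Mathlib

section
/- Let A, B, C, D be points in the plane ℝ² with A ≠ B and C ≠ D. The segments AB and CD are in convex position if and only if the line through A and B does not intersect the segment CD and the line through C and D does not intersect the segment AB. -/
open scoped Real

noncomputable section

/-- Integer 2×2 determinant of two planar vectors. -/
def detZ (v w : ℤ × ℤ) : ℤ := v.1 * w.2 - v.2 * w.1

/-- Real 2×2 determinant of two planar vectors. -/
def detR (v w : ℝ × ℝ) : ℝ := v.1 * w.2 - v.2 * w.1

/-- The grid 𝒢_{m,n} = {0,…,m−1} × {0,…,n−1} of integer points. -/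
def Grid (m n : ℕ) : Set (ℤ × ℤ) :=
  {p | 0 ≤ p.1 ∧ p.1 < (m : ℤ) ∧ 0 ≤ p.2 ∧ p.2 < (n : ℤ)}

/-- The boundary B(𝒢_{m,n}) of the grid. -/
def GridBoundary (m n : ℕ) : Set (ℤ × ℤ) :=
  {p | p ∈ Grid m n ∧ (p.1 = 0 ∨ p.1 = (m : ℤ) - 1 ∨ p.2 = 0 ∨ p.2 = (n : ℤ) - 1)}

/-- The segment AB is prime: A, B are the only integer points on it
(equivalently, the coordinates of B − A are coprime). -/
def PrimeSeg (A B : ℤ × ℤ) : Prop := Int.gcd (B.1 - A.1) (B.2 - A.2) = 1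

/-- f_{→AB}(X) = 1 : X on the line through A, B and strictly closer to A than to B,
or the triangle →ABX is counterclockwise. -/
def SegTrue (A B X : ℤ × ℤ) : Prop :=
  (detZ (B - A) (X - A) = 0 ∧
    (X.1 - A.1) ^ 2 + (X.2 - A.2) ^ 2 < (X.1 - B.1) ^ 2 + (X.2 - B.2) ^ 2) ∨
  0 < detZ (B - A) (X - A)

/-- The pair of oriented segments (→AB, →CD) with endpoints in 𝒢_{m,n} is proper. -/
def ProperPair (m n : ℕ) (A B C D : ℤ × ℤ) : Prop :=
  A ∈ Grid m n ∧ B ∈ Grid m n ∧ C ∈ Grid m n ∧ D ∈ Grid m n ∧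
  PrimeSeg A B ∧ PrimeSeg C D ∧
  SegTrue C D A ∧ SegTrue C D B ∧ SegTrue A B C ∧ SegTrue A B D

/-- A, B, C, D (in this cyclic order) are the vertices of a (strictly) convex
quadrilateral with sides AB, BC, CD, DA. -/
def QuadConv (A B C D : ℤ × ℤ) : Prop :=
  (0 < detZ (B - A) (C - B) ∧ 0 < detZ (C - B) (D - C) ∧
    0 < detZ (D - C) (A - D) ∧ 0 < detZ (A - D) (B - A)) ∨
  (detZ (B - A) (C - B) < 0 ∧ detZ (C - B) (D - C) < 0 ∧
    detZ (D - C) (A - D) < 0 ∧ detZ (A - D) (B - A) < 0)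

/-- The segments AB and CD are in convex position: A, B, C, D are the vertices of a
convex quadrilateral in which AB and CD are opposite sides. -/
def ConvexPos (A B C D : ℤ × ℤ) : Prop := QuadConv A B C D ∨ QuadConv A B D C

/-- Real-plane version of `QuadConv`. -/
def QuadConvR (A B C D : ℝ × ℝ) : Prop :=
  (0 < detR (B - A) (C - B) ∧ 0 < detR (C - B) (D - C) ∧
    0 < detR (D - C) (A - D) ∧ 0 < detR (A - D) (B - A)) ∨
  (detR (B - A) (C - B) < 0 ∧ detR (C - B) (D - C) < 0 ∧
    detR (D - C) (A - D) < 0 ∧ detR (A - D) (B - A) < 0)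

/-- Real-plane version of `ConvexPos`. -/
def ConvexPosR (A B C D : ℝ × ℝ) : Prop := QuadConvR A B C D ∨ QuadConvR A B D C

/-- Embedding of integer points into the real plane. -/
def ptR (p : ℤ × ℤ) : ℝ × ℝ := ((p.1 : ℝ), (p.2 : ℝ))

/-- Embedding of integer points into the Euclidean plane. -/
def ptE (p : ℤ × ℤ) : EuclideanSpace ℝ (Fin 2) := WithLp.toLp 2 ![(p.1 : ℝ), (p.2 : ℝ)]

/-- A threshold function on 𝒢_{m,n}, identified with its set T of true points:
the convex hulls of true and false points are disjoint. -/
def IsThresholdSet (m n : ℕ) (T : Set (ℤ × ℤ)) : Prop :=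
  T ⊆ Grid m n ∧
  Disjoint (convexHull ℝ (ptR '' T)) (convexHull ℝ (ptR '' (Grid m n \ T)))

/-- A 2-threshold function on 𝒢_{m,n}, identified with its set of true points. -/
def IsTwoThresholdSet (m n : ℕ) (T : Set (ℤ × ℤ)) : Prop :=
  ∃ T₁ T₂ : Set (ℤ × ℤ), IsThresholdSet m n T₁ ∧ IsThresholdSet m n T₂ ∧ T = T₁ ∩ T₂

/-- t₂(m,n): the number of 2-threshold functions on 𝒢_{m,n}. -/
def t2 (m n : ℕ) : ℕ := {T : Set (ℤ × ℤ) | IsTwoThresholdSet m n T}.ncard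

/-- The set of proper (unordered) pairs of oriented segments in 𝒢_{m,n}. -/
def ProperPairs (m n : ℕ) : Set (Sym2 ((ℤ × ℤ) × (ℤ × ℤ))) :=
  {z | ∃ A B C D : ℤ × ℤ, z = s((A, B), (C, D)) ∧ ProperPair m n A B C D}

/-- q(m,n): the number of proper pairs of oriented segments in 𝒢_{m,n}. -/
def qcount (m n : ℕ) : ℕ := (ProperPairs m n).ncard

/-- The set of unordered pairs of (non-oriented) prime segments with endpoints in
𝒢_{m,n} that are in convex position. -/
def ConvexPrimePairs (m n : ℕ) : Set (Sym2 (Sym2 (ℤ × ℤ))) :=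
  {z | ∃ A B C D : ℤ × ℤ, z = s(s(A, B), s(C, D)) ∧
    A ∈ Grid m n ∧ B ∈ Grid m n ∧ C ∈ Grid m n ∧ D ∈ Grid m n ∧
    PrimeSeg A B ∧ PrimeSeg C D ∧ ConvexPos A B C D}

/-- p(m,n): the number of unordered pairs of prime segments in convex position with
endpoints in 𝒢_{m,n}. -/
def pcount (m n : ℕ) : ℕ := (ConvexPrimePairs m n).ncard

/-- The axis-aligned bounding box of {A,B,C,D} is the rectangle [0,u]×[0,v]. -/
def InBBox (u v : ℕ) (A B C D : ℤ × ℤ) : Prop :=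
  min (min A.1 B.1) (min C.1 D.1) = 0 ∧
  max (max A.1 B.1) (max C.1 D.1) = (u : ℤ) ∧
  min (min A.2 B.2) (min C.2 D.2) = 0 ∧
  max (max A.2 B.2) (max C.2 D.2) = (v : ℤ)

/-- The pair {AB, CD} of prime segments is in convex position with bounding box
ℛ_{u,v} = [0,u]×[0,v]. -/
def ZPair (u v : ℕ) (A B C D : ℤ × ℤ) : Prop :=
  PrimeSeg A B ∧ PrimeSeg C D ∧ ConvexPos A B C D ∧ InBBox u v A B C D

/-- Z(u,v): pairs of prime segments in convex position with bounding box ℛ_{u,v}. -/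
def Zset (u v : ℕ) : Set (Sym2 (Sym2 (ℤ × ℤ))) :=
  {z | ∃ A B C D : ℤ × ℤ, z = s(s(A, B), s(C, D)) ∧ ZPair u v A B C D}

/-- P is a corner (vertex) of the rectangle ℛ_{u,v} = [0,u]×[0,v]. -/
def RectCorner (u v : ℕ) (P : ℤ × ℤ) : Prop :=
  (P.1 = 0 ∨ P.1 = (u : ℤ)) ∧ (P.2 = 0 ∨ P.2 = (v : ℤ))

/-- The number of points among A, B, C, D that are corners of ℛ_{u,v}. -/
def cornerCount (u v : ℕ) (A B C D : ℤ × ℤ) : ℕ :=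
  {P : ℤ × ℤ | P ∈ ({A, B, C, D} : Set (ℤ × ℤ)) ∧ RectCorner u v P}.ncard

/-- Z_i(u,v): the pairs in Z(u,v) with exactly i endpoints at corners of ℛ_{u,v}. -/
def Zi (i u v : ℕ) : Set (Sym2 (Sym2 (ℤ × ℤ))) :=
  {z | ∃ A B C D : ℤ × ℤ, z = s(s(A, B), s(C, D)) ∧ ZPair u v A B C D ∧
    cornerCount u v A B C D = i}

/-- Z₂ᵃ(u,v): exactly two corner endpoints, lying at adjacent corners of ℛ_{u,v}. -/
def Z2a (u v : ℕ) : Set (Sym2 (Sym2 (ℤ × ℤ))) :=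
  {z | ∃ A B C D : ℤ × ℤ, z = s(s(A, B), s(C, D)) ∧ ZPair u v A B C D ∧
    cornerCount u v A B C D = 2 ∧
    ∃ X Y : ℤ × ℤ, X ∈ ({A, B, C, D} : Set (ℤ × ℤ)) ∧ Y ∈ ({A, B, C, D} : Set (ℤ × ℤ)) ∧
      X ≠ Y ∧ RectCorner u v X ∧ RectCorner u v Y ∧ (X.1 = Y.1 ∨ X.2 = Y.2)}

/-- Z₂ᵇ(u,v): exactly two corner endpoints, at opposite corners of ℛ_{u,v},
both on the same segment of the pair. -/
def Z2b (u v : ℕ) : Set (Sym2 (Sym2 (ℤ × ℤ))) :=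
  {z | ∃ A B C D : ℤ × ℤ, z = s(s(A, B), s(C, D)) ∧ ZPair u v A B C D ∧
    cornerCount u v A B C D = 2 ∧
    RectCorner u v A ∧ RectCorner u v B ∧ A.1 ≠ B.1 ∧ A.2 ≠ B.2}

/-- Z₂ᶜ(u,v): exactly two corner endpoints, at opposite corners of ℛ_{u,v},
belonging to different segments of the pair. -/
def Z2c (u v : ℕ) : Set (Sym2 (Sym2 (ℤ × ℤ))) :=
  {z | ∃ A B C D : ℤ × ℤ, z = s(s(A, B), s(C, D)) ∧ ZPair u v A B C D ∧
    cornerCount u v A B C D = 2 ∧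
    RectCorner u v A ∧ RectCorner u v C ∧ A.1 ≠ C.1 ∧ A.2 ≠ C.2}

/-- Z₁ᵃ(u,v): exactly one corner endpoint A; the other endpoint B of the segment
containing A is an interior point of ℛ_{u,v}. -/
def Z1a (u v : ℕ) : Set (Sym2 (Sym2 (ℤ × ℤ))) :=
  {z | ∃ A B C D : ℤ × ℤ, z = s(s(A, B), s(C, D)) ∧ ZPair u v A B C D ∧
    cornerCount u v A B C D = 1 ∧ RectCorner u v A ∧
    0 < B.1 ∧ B.1 < (u : ℤ) ∧ 0 < B.2 ∧ B.2 < (v : ℤ)}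

/-- Z₁ᵇ(u,v): exactly one corner endpoint A; the other endpoint B of the segment
containing A lies on the boundary of ℛ_{u,v}. -/
def Z1b (u v : ℕ) : Set (Sym2 (Sym2 (ℤ × ℤ))) :=
  {z | ∃ A B C D : ℤ × ℤ, z = s(s(A, B), s(C, D)) ∧ ZPair u v A B C D ∧
    cornerCount u v A B C D = 1 ∧ RectCorner u v A ∧
    (B.1 = 0 ∨ B.1 = (u : ℤ) ∨ B.2 = 0 ∨ B.2 = (v : ℤ))}

end

theorem line_inter_seg (P Q R S : ℝ × ℝ) (hPQ : P ≠ Q) :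
    (affineSpan ℝ {P, Q} : Set (ℝ × ℝ)) ∩ segment ℝ R S = ∅ ↔
      0 < detR (Q - P) (R - P) * detR (Q - P) (S - P) := by
  have hmem : ∀ X : ℝ × ℝ, X ∈ (affineSpan ℝ {P, Q} : Set (ℝ × ℝ)) ↔
      ∃ r : ℝ, r • (Q - P) = X - P := by
    intro X
    have hXe : X = (X - P) +ᵥ P := by simp
    constructor
    · intro hX
      rw [hXe, SetLike.mem_coe, vadd_left_mem_affineSpan_pair] at hX
      simpa using hX
    · intro ⟨r, hr⟩
      rw [hXe, SetLike.mem_coe, vadd_left_mem_affineSpan_pair]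
      exact ⟨r, by simpa using hr⟩
  set f := detR (Q - P) (R - P) with hf
  set g := detR (Q - P) (S - P) with hg
  constructor
  · intro hemp
    by_contra hle
    push_neg at hle
    obtain ⟨t, ht0, ht1, hzero⟩ : ∃ t : ℝ, 0 ≤ t ∧ t ≤ 1 ∧ f + t * (g - f) = 0 := by
      rcases mul_nonpos_iff.mp hle with ⟨hf0, hg0⟩ | ⟨hf0, hg0⟩
      · have hden : 0 ≤ f - g := by linarith
        rcases hden.eq_or_lt with h | h
        · exact ⟨0, le_refl 0, zero_le_one, by nlinarith⟩
        · refine ⟨f / (f - g), div_nonneg hf0 hden, (div_le_one h).2 (by linarith), ?_⟩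
          have hne : f - g ≠ 0 := ne_of_gt h
          field_simp
          ring
      · have hden : 0 ≤ g - f := by linarith
        rcases hden.eq_or_lt with h | h
        · exact ⟨0, le_refl 0, zero_le_one, by nlinarith⟩
        · refine ⟨(-f) / (g - f), div_nonneg (by linarith) hden,
            (div_le_one h).2 (by linarith), ?_⟩
          have hne : g - f ≠ 0 := ne_of_gt h
          field_simp
          ring
  
    set X : ℝ × ℝ := R + t • (S - R) with hX
    have hseg : X ∈ segment ℝ R S := by
      rw [segment_eq_image']
      exact ⟨t, ⟨ht0, ht1⟩, rfl⟩
    have hdet : detR (Q - P) (X - P) = 0 := by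
      simp only [hf, hg, detR, Prod.fst_sub, Prod.snd_sub] at hzero
      simp only [hX, detR, Prod.fst_sub, Prod.snd_sub, Prod.fst_add, Prod.snd_add,
        Prod.smul_fst, Prod.smul_snd, smul_eq_mul]
      linear_combination hzero
    have hlin : X ∈ (affineSpan ℝ {P, Q} : Set (ℝ × ℝ)) := by
      rw [hmem]
      have hQP : Q - P ≠ 0 := sub_ne_zero.2 (Ne.symm hPQ)
      simp only [detR, Prod.fst_sub, Prod.snd_sub] at hdet
      rcases eq_or_ne (Q.1 - P.1) 0 with h1 | h1
      · have h2 : Q.2 - P.2 ≠ 0 := by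
          intro h2
          apply hQP
          have he : Q - P = ((Q.1 - P.1), (Q.2 - P.2)) := rfl
          rw [he, h1, h2]; rfl
        have hx1 : X.1 - P.1 = 0 := by
          have h' : (Q.2 - P.2) * (X.1 - P.1) = 0 := by
            linear_combination (X.2 - P.2) * h1 - hdet
          exact (mul_eq_zero.mp h').resolve_left h2
        refine ⟨(X.2 - P.2) / (Q.2 - P.2), ?_⟩
        apply Prod.ext
        · simp only [Prod.smul_fst, Prod.fst_sub, smul_eq_mul, h1, hx1, mul_zero]
        · simp only [Prod.smul_snd, Prod.snd_sub, smul_eq_mul]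
          field_simp
      · refine ⟨(X.1 - P.1) / (Q.1 - P.1), ?_⟩
        apply Prod.ext
        · simp only [Prod.smul_fst, Prod.fst_sub, smul_eq_mul]
          field_simp
        · simp only [Prod.smul_snd, Prod.snd_sub, smul_eq_mul]
          rw [div_mul_eq_mul_div, div_eq_iff h1]
          linear_combination -hdet
    exact absurd hemp (by
      rw [Set.eq_empty_iff_forall_notMem]
      push_neg
      exact ⟨X, hlin, hseg⟩)
  · intro hpos
    rw [Set.eq_empty_iff_forall_notMem]
    rintro X ⟨hlin, hseg⟩
    rw [hmem] at hlin
    obtain ⟨r, hr⟩ := hlin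
    rw [segment_eq_image'] at hseg
    obtain ⟨t, ⟨ht0, ht1⟩, hXt⟩ := hseg
    have hdet : detR (Q - P) (X - P) = 0 := by
      rw [← hr]
      simp only [detR, Prod.smul_fst, Prod.smul_snd, Prod.fst_sub, Prod.snd_sub, smul_eq_mul]
      ring
    have hXP : X = R + t • (S - R) := hXt.symm
    have hcomb : f + t * (g - f) = 0 := by
      simp only [hf, hg, detR, Prod.fst_sub, Prod.snd_sub]
      rw [hXP] at hdet
      simp only [detR, Prod.fst_sub, Prod.snd_sub, Prod.fst_add, Prod.snd_add,
        Prod.smul_fst, Prod.smul_snd, smul_eq_mul] at hdet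
      linear_combination hdet
    have hg2 : 0 < g ^ 2 := by nlinarith [mul_pos hpos hpos, sq_nonneg f]
    rcases ht0.eq_or_lt with h | h
    · rw [← h, zero_mul, add_zero] at hcomb
      rw [hcomb, zero_mul] at hpos
      exact lt_irrefl 0 hpos
    · have hE : f * g * (1 - t) + t * g ^ 2 = 0 := by linear_combination g * hcomb
      nlinarith [mul_pos h hg2, mul_nonneg (sub_nonneg.2 ht1) hpos.le, hE]

/-- AB and CD are in convex position iff the line through A, B misses the
segment CD and the line through C, D misses the segment AB. -/
theorem convexPos_iff_lines_miss_segments (A B C D : ℝ × ℝ) (hAB : A ≠ B) (hCD : C ≠ D) :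
    ConvexPosR A B C D ↔
      (affineSpan ℝ {A, B} : Set (ℝ × ℝ)) ∩ segment ℝ C D = ∅ ∧
      (affineSpan ℝ {C, D} : Set (ℝ × ℝ)) ∩ segment ℝ A B = ∅ := by
  rw [line_inter_seg A B C D hAB, line_inter_seg C D A B hCD]
  have h1 : detR (B - A) (C - B) = detR (B - A) (C - A) := by
    simp only [detR, Prod.fst_sub, Prod.snd_sub]; ring
  have h2 : detR (C - B) (D - C) = detR (D - C) (B - C) := by
    simp only [detR, Prod.fst_sub, Prod.snd_sub]; ring
  have h3 : detR (D - C) (A - D) = detR (D - C) (A - C) := by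
    simp only [detR, Prod.fst_sub, Prod.snd_sub]; ring
  have h4 : detR (A - D) (B - A) = detR (B - A) (D - A) := by
    simp only [detR, Prod.fst_sub, Prod.snd_sub]; ring
  have h5 : detR (B - A) (D - B) = detR (B - A) (D - A) := by
    simp only [detR, Prod.fst_sub, Prod.snd_sub]; ring
  have h6 : detR (D - B) (C - D) = -detR (D - C) (B - C) := by
    simp only [detR, Prod.fst_sub, Prod.snd_sub]; ring
  have h7 : detR (C - D) (A - C) = -detR (D - C) (A - C) := by
    simp only [detR, Prod.fst_sub, Prod.snd_sub]; ring
  have h8 : detR (A - C) (B - A) = detR (B - A) (C - A) := by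
    simp only [detR, Prod.fst_sub, Prod.snd_sub]; ring
  unfold ConvexPosR QuadConvR
  rw [h1, h2, h3, h4, h5, h6, h7, h8]
  set f := detR (B - A) (C - A) with hfdef
  set g := detR (B - A) (D - A) with hgdef
  set h := detR (D - C) (A - C) with hhdef
  set k := detR (D - C) (B - C) with hkdef
  constructor
  · rintro ((⟨a, b, c, d⟩ | ⟨a, b, c, d⟩) | (⟨a, b, c, d⟩ | ⟨a, b, c, d⟩)) <;>
      constructor <;> nlinarith
  · rintro ⟨hfg, hhk⟩
    rcases lt_trichotomy f 0 with hf | hf | hf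
    · have hg : g < 0 := by nlinarith
      rcases lt_trichotomy h 0 with hh | hh | hh
      · have hk : k < 0 := by nlinarith
        exact Or.inl (Or.inr ⟨hf, hk, hh, hg⟩)
      · exfalso; rw [hh] at hhk; simp at hhk
      · have hk : 0 < k := by nlinarith
        exact Or.inr (Or.inr ⟨hg, by linarith, by linarith, hf⟩)
    · exfalso; rw [hf] at hfg; simp at hfg
    · have hg : 0 < g := by nlinarith
      rcases lt_trichotomy h 0 with hh | hh | hh
      · have hk : k < 0 := by nlinarith
        exact Or.inr (Or.inl ⟨hg, by linarith, by linarith, hf⟩)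
      · exfalso; rw [hh] at hhk; simp at hhk
      · have hk : 0 < k := by nlinarith
        exact Or.inl (Or.inl ⟨hf, hk, hh, hg⟩)
end

section
/- The map sending a proper pair of oriented segments (→AB, →CD) whose endpoints A, B, C, D are in convex position to the underlying unordered pair of (non-oriented) segments {AB, CD} is a bijection between the set of proper pairs of oriented segments in 𝒢_{m,n} whose two segments are in convex position and the set of unordered pairs of prime segments with endpoints in 𝒢_{m,n} that are in convex position. -/
open scoped Real

section helpers

private lemma primeSeg_symm {A B : ℤ × ℤ} (h : PrimeSeg A B) : PrimeSeg B A := by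
  unfold PrimeSeg at *
  unfold Int.gcd at h ⊢
  rw [show A.1 - B.1 = -(B.1 - A.1) by ring, show A.2 - B.2 = -(B.2 - A.2) by ring,
    Int.natAbs_neg, Int.natAbs_neg]
  exact h

private lemma cp_det1 {A B C D : ℤ × ℤ} (h : ConvexPos A B C D) :
    detZ (B - A) (C - A) ≠ 0 := by
  intro hc
  rcases h with (⟨h1,h2,h3,h4⟩|⟨h1,h2,h3,h4⟩)|(⟨h1,h2,h3,h4⟩|⟨h1,h2,h3,h4⟩) <;>
    simp only [detZ, Prod.fst_sub, Prod.snd_sub] at h1 h2 h3 h4 hc <;> linarith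

private lemma cp_det2 {A B C D : ℤ × ℤ} (h : ConvexPos A B C D) :
    detZ (D - C) (A - C) ≠ 0 := by
  intro hc
  rcases h with (⟨h1,h2,h3,h4⟩|⟨h1,h2,h3,h4⟩)|(⟨h1,h2,h3,h4⟩|⟨h1,h2,h3,h4⟩) <;>
    simp only [detZ, Prod.fst_sub, Prod.snd_sub] at h1 h2 h3 h4 hc <;> linarith

private lemma flip_contra {A B X : ℤ × ℤ} (hne : detZ (B - A) (X - A) ≠ 0)
    (h1 : SegTrue A B X) (h2 : SegTrue B A X) : False := by
  have hne' : ¬ detZ (B - A) (X - A) = 0 := hne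
  rcases h1 with ⟨h1, _⟩ | h1 <;> rcases h2 with ⟨h2, _⟩ | h2 <;>
    simp only [detZ, Prod.fst_sub, Prod.snd_sub] at h1 h2 hne' <;>
    first
      | exact hne' h1
      | linarith

end helpers

/-- forgetting orientations is a bijection between proper pairs of oriented
segments in convex position and unordered pairs of prime segments in convex position. -/
theorem proper_pairs_to_prime_pairs_bijection (m n : ℕ) :
    Set.BijOn (Sym2.map (Function.uncurry Sym2.mk))
      {z : Sym2 ((ℤ × ℤ) × (ℤ × ℤ)) | ∃ A B C D : ℤ × ℤ,
        z = s((A, B), (C, D)) ∧ ProperPair m n A B C D ∧ ConvexPos A B C D}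
      (ConvexPrimePairs m n) := by
  refine ⟨?_, ?_, ?_⟩
  · rintro z ⟨A, B, C, D, rfl, hP, hC⟩
    obtain ⟨hA, hB, hCg, hDg, hp1, hp2, _, _, _, _⟩ := hP
    exact ⟨A, B, C, D, by rw [Sym2.map_pair_eq, Function.uncurry_apply_pair, Function.uncurry_apply_pair], hA, hB, hCg, hDg, hp1, hp2, hC⟩
  · rintro z1 ⟨A, B, C, D, rfl, hP, hC⟩ z2 ⟨A', B', C', D', rfl, hP', hC'⟩ heq
    rw [Sym2.map_pair_eq, Sym2.map_pair_eq, Function.uncurry_apply_pair,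
      Function.uncurry_apply_pair, Function.uncurry_apply_pair, Function.uncurry_apply_pair,
      Sym2.eq_iff] at heq
    obtain ⟨_, _, _, _, _, _, hCDA, hCDB, hABC, hABD⟩ := hP
    have hd1 := cp_det1 hC
    have hd2 := cp_det2 hC
    rcases heq with ⟨e1, e2⟩ | ⟨e1, e2⟩ <;>
      rw [Sym2.eq_iff] at e1 e2 <;>
      rcases e1 with ⟨rfl, rfl⟩ | ⟨rfl, rfl⟩ <;> rcases e2 with ⟨rfl, rfl⟩ | ⟨rfl, rfl⟩ <;>
      obtain ⟨_, _, _, _, _, _, hCDA', hCDB', hABC', hABD'⟩ := hP'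
    · rfl
    · exact (flip_contra hd2 hCDA hCDA').elim
    · exact (flip_contra hd1 hABC hABC').elim
    · exact (flip_contra hd1 hABC hABD').elim
    · exact Sym2.eq_swap
    · exact (flip_contra hd2 hCDA hABC').elim
    · exact (flip_contra hd1 hABC hCDA').elim
    · exact (flip_contra hd1 hABC hCDB').elim
  · rintro z ⟨A, B, C, D, rfl, hA, hB, hCg, hDg, hp1, hp2, hcp⟩
    rcases hcp with (⟨h1,h2,h3,h4⟩|⟨h1,h2,h3,h4⟩)|(⟨h1,h2,h3,h4⟩|⟨h1,h2,h3,h4⟩)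
    · refine ⟨s((A, B), (C, D)),
        ⟨A, B, C, D, rfl,
          ⟨hA, hB, hCg, hDg, hp1, hp2,
            Or.inr ?_, Or.inr ?_, Or.inr ?_, Or.inr ?_⟩,
          Or.inl (Or.inl ⟨h1, h2, h3, h4⟩)⟩, by rw [Sym2.map_pair_eq, Function.uncurry_apply_pair, Function.uncurry_apply_pair]⟩ <;>
        (simp only [detZ, Prod.fst_sub, Prod.snd_sub] at h1 h2 h3 h4 ⊢; linarith)
    · refine ⟨s((B, A), (D, C)),
        ⟨B, A, D, C, rfl,
          ⟨hB, hA, hDg, hCg, primeSeg_symm hp1, primeSeg_symm hp2,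
            Or.inr ?_, Or.inr ?_, Or.inr ?_, Or.inr ?_⟩,
          Or.inl (Or.inl ⟨?_, ?_, ?_, ?_⟩)⟩,
        by rw [Sym2.map_pair_eq, Function.uncurry_apply_pair, Function.uncurry_apply_pair, show s(B, A) = s(A, B) from Sym2.eq_swap,
               show s(D, C) = s(C, D) from Sym2.eq_swap]⟩ <;>
        (simp only [detZ, Prod.fst_sub, Prod.snd_sub] at h1 h2 h3 h4 ⊢; linarith)
    · refine ⟨s((A, B), (D, C)),
        ⟨A, B, D, C, rfl,
          ⟨hA, hB, hDg, hCg, hp1, primeSeg_symm hp2,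
            Or.inr ?_, Or.inr ?_, Or.inr ?_, Or.inr ?_⟩,
          Or.inl (Or.inl ⟨h1, h2, h3, h4⟩)⟩,
        by rw [Sym2.map_pair_eq, Function.uncurry_apply_pair, Function.uncurry_apply_pair, show s(D, C) = s(C, D) from Sym2.eq_swap]⟩ <;>
        (simp only [detZ, Prod.fst_sub, Prod.snd_sub] at h1 h2 h3 h4 ⊢; linarith)
    · refine ⟨s((B, A), (C, D)),
        ⟨B, A, C, D, rfl,
          ⟨hB, hA, hCg, hDg, primeSeg_symm hp1, hp2,
            Or.inr ?_, Or.inr ?_, Or.inr ?_, Or.inr ?_⟩,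
          Or.inl (Or.inl ⟨?_, ?_, ?_, ?_⟩)⟩,
        by rw [Sym2.map_pair_eq, Function.uncurry_apply_pair, Function.uncurry_apply_pair, show s(B, A) = s(A, B) from Sym2.eq_swap]⟩ <;>
        (simp only [detZ, Prod.fst_sub, Prod.snd_sub] at h1 h2 h3 h4 ⊢; linarith)
end

section
/- There is an absolute constant K such that for all positive integers u, v, |Z₃(u,v)| + |Z₄(u,v)| ≤ K·uv. -/
open scoped Real

namespace Z34Aux

/-- The four corners as a finset. -/
def cornerFS (u v : ℕ) : Finset (ℤ × ℤ) :=
  {((0:ℤ),(0:ℤ)), ((u:ℤ),(0:ℤ)), ((0:ℤ),(v:ℤ)), ((u:ℤ),(v:ℤ))}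

/-- The box [0,u]×[0,v] as a finset. -/
noncomputable def boxFS (u v : ℕ) : Finset (ℤ × ℤ) := Finset.Icc (0:ℤ) (u:ℤ) ×ˢ Finset.Icc (0:ℤ) (v:ℤ)

lemma cornerFS_card (u v : ℕ) : (cornerFS u v).card ≤ 4 := by
  refine (Finset.card_insert_le _ _).trans (Nat.succ_le_succ ?_)
  refine (Finset.card_insert_le _ _).trans (Nat.succ_le_succ ?_)
  refine (Finset.card_insert_le _ _).trans (Nat.succ_le_succ ?_)
  simp

lemma boxFS_card (u v : ℕ) : (boxFS u v).card = (u + 1) * (v + 1) := by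
  have h1 : ((u:ℤ) + 1 - 0).toNat = u + 1 := by omega
  have h2 : ((v:ℤ) + 1 - 0).toNat = v + 1 := by omega
  rw [boxFS, Finset.card_product, Int.card_Icc, Int.card_Icc, h1, h2]

lemma mem_cornerFS {u v : ℕ} {P : ℤ × ℤ} (h : RectCorner u v P) : P ∈ cornerFS u v := by
  obtain ⟨h1, h2⟩ := h
  simp only [cornerFS, Finset.mem_insert, Finset.mem_singleton, Prod.ext_iff]
  tauto

lemma mem_boxFS {u v : ℕ} {P : ℤ × ℤ} (h1 : 0 ≤ P.1) (h2 : P.1 ≤ (u:ℤ))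
    (h3 : 0 ≤ P.2) (h4 : P.2 ≤ (v:ℤ)) : P ∈ boxFS u v := by
  simp only [boxFS, Finset.mem_product, Finset.mem_Icc]
  exact ⟨⟨h1, h2⟩, ⟨h3, h4⟩⟩

lemma corner_mem_boxFS {u v : ℕ} {P : ℤ × ℤ} (h : RectCorner u v P) : P ∈ boxFS u v := by
  obtain ⟨h1, h2⟩ := h
  refine mem_boxFS ?_ ?_ ?_ ?_ <;> rcases h1 with h1 | h1 <;> rcases h2 with h2 | h2 <;> omega

abbrev Tup := (ℤ × ℤ) × (ℤ × ℤ) × (ℤ × ℤ) × (ℤ × ℤ)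

noncomputable def bigFS (u v : ℕ) : Finset Tup :=
  (boxFS u v ×ˢ cornerFS u v ×ˢ cornerFS u v ×ˢ cornerFS u v) ∪
  (cornerFS u v ×ˢ boxFS u v ×ˢ cornerFS u v ×ˢ cornerFS u v) ∪
  (cornerFS u v ×ˢ cornerFS u v ×ˢ boxFS u v ×ˢ cornerFS u v) ∪
  (cornerFS u v ×ˢ cornerFS u v ×ˢ cornerFS u v ×ˢ boxFS u v)

lemma bigFS_card (u v : ℕ) : (bigFS u v).card ≤ 256 * ((u + 1) * (v + 1)) := by
  have hc := cornerFS_card u v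
  have hb := boxFS_card u v
  have h1 : (boxFS u v ×ˢ cornerFS u v ×ˢ cornerFS u v ×ˢ cornerFS u v).card
      ≤ (u + 1) * (v + 1) * (4 * (4 * 4)) := by
    simp only [Finset.card_product]
    rw [hb]
    exact Nat.mul_le_mul le_rfl (Nat.mul_le_mul hc (Nat.mul_le_mul hc hc))
  have h2 : (cornerFS u v ×ˢ boxFS u v ×ˢ cornerFS u v ×ˢ cornerFS u v).card
      ≤ 4 * ((u + 1) * (v + 1) * (4 * 4)) := by
    simp only [Finset.card_product]
    rw [hb]
    exact Nat.mul_le_mul hc (Nat.mul_le_mul le_rfl (Nat.mul_le_mul hc hc))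
  have h3 : (cornerFS u v ×ˢ cornerFS u v ×ˢ boxFS u v ×ˢ cornerFS u v).card
      ≤ 4 * (4 * ((u + 1) * (v + 1) * 4)) := by
    simp only [Finset.card_product]
    rw [hb]
    exact Nat.mul_le_mul hc (Nat.mul_le_mul hc (Nat.mul_le_mul le_rfl hc))
  have h4 : (cornerFS u v ×ˢ cornerFS u v ×ˢ cornerFS u v ×ˢ boxFS u v).card
      ≤ 4 * (4 * (4 * ((u + 1) * (v + 1)))) := by
    simp only [Finset.card_product]
    rw [hb]
    exact Nat.mul_le_mul hc (Nat.mul_le_mul hc (Nat.mul_le_mul hc le_rfl))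
  have := Finset.card_union_le
    ((boxFS u v ×ˢ cornerFS u v ×ˢ cornerFS u v ×ˢ cornerFS u v) ∪
      (cornerFS u v ×ˢ boxFS u v ×ˢ cornerFS u v ×ˢ cornerFS u v) ∪
      (cornerFS u v ×ˢ cornerFS u v ×ˢ boxFS u v ×ˢ cornerFS u v))
    (cornerFS u v ×ˢ cornerFS u v ×ˢ cornerFS u v ×ˢ boxFS u v)
  have := Finset.card_union_le
    ((boxFS u v ×ˢ cornerFS u v ×ˢ cornerFS u v ×ˢ cornerFS u v) ∪
      (cornerFS u v ×ˢ boxFS u v ×ˢ cornerFS u v ×ˢ cornerFS u v))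
    (cornerFS u v ×ˢ cornerFS u v ×ˢ boxFS u v ×ˢ cornerFS u v)
  have := Finset.card_union_le
    (boxFS u v ×ˢ cornerFS u v ×ˢ cornerFS u v ×ˢ cornerFS u v)
    (cornerFS u v ×ˢ boxFS u v ×ˢ cornerFS u v ×ˢ cornerFS u v)
  unfold bigFS
  nlinarith [Nat.zero_le ((u+1)*(v+1))]

lemma pair_bound (u v : ℕ) (A B C D X Y : ℤ × ℤ)
    (h : ∀ P ∈ ({A, B, C, D} : Set (ℤ × ℤ)), RectCorner u v P → P = X ∨ P = Y) :
    cornerCount u v A B C D ≤ 2 := by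
  have hsub : {P : ℤ × ℤ | P ∈ ({A, B, C, D} : Set (ℤ × ℤ)) ∧ RectCorner u v P}
      ⊆ {X, Y} := by
    rintro P ⟨hP, hc⟩
    exact h P hP hc
  refine (Set.ncard_le_ncard hsub (Set.toFinite _)).trans ?_
  refine (Set.ncard_insert_le _ _).trans ?_
  simp

lemma three_of_four (u v : ℕ) (A B C D : ℤ × ℤ) (h3 : 3 ≤ cornerCount u v A B C D) :
    (RectCorner u v B ∧ RectCorner u v C ∧ RectCorner u v D) ∨
    (RectCorner u v A ∧ RectCorner u v C ∧ RectCorner u v D) ∨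
    (RectCorner u v A ∧ RectCorner u v B ∧ RectCorner u v D) ∨
    (RectCorner u v A ∧ RectCorner u v B ∧ RectCorner u v C) := by
  by_contra hcon
  have hle : cornerCount u v A B C D ≤ 2 := by
    by_cases hA : RectCorner u v A <;> by_cases hB : RectCorner u v B <;>
      by_cases hC : RectCorner u v C <;> by_cases hD : RectCorner u v D
    · tauto
    · tauto
    · tauto
    · exact pair_bound u v A B C D A B (by
        intro P hP hc
        simp only [Set.mem_insert_iff, Set.mem_singleton_iff] at hP
        rcases hP with rfl | rfl | rfl | rfl <;> simp_all)
    · tauto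
    · exact pair_bound u v A B C D A C (by
        intro P hP hc
        simp only [Set.mem_insert_iff, Set.mem_singleton_iff] at hP
        rcases hP with rfl | rfl | rfl | rfl <;> simp_all)
    · exact pair_bound u v A B C D A D (by
        intro P hP hc
        simp only [Set.mem_insert_iff, Set.mem_singleton_iff] at hP
        rcases hP with rfl | rfl | rfl | rfl <;> simp_all)
    · exact pair_bound u v A B C D A B (by
        intro P hP hc
        simp only [Set.mem_insert_iff, Set.mem_singleton_iff] at hP
        rcases hP with rfl | rfl | rfl | rfl <;> simp_all)
    · tauto
    · exact pair_bound u v A B C D B C (by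
        intro P hP hc
        simp only [Set.mem_insert_iff, Set.mem_singleton_iff] at hP
        rcases hP with rfl | rfl | rfl | rfl <;> simp_all)
    · exact pair_bound u v A B C D B D (by
        intro P hP hc
        simp only [Set.mem_insert_iff, Set.mem_singleton_iff] at hP
        rcases hP with rfl | rfl | rfl | rfl <;> simp_all)
    · exact pair_bound u v A B C D B A (by
        intro P hP hc
        simp only [Set.mem_insert_iff, Set.mem_singleton_iff] at hP
        rcases hP with rfl | rfl | rfl | rfl <;> simp_all)
    · exact pair_bound u v A B C D C D (by
        intro P hP hc
        simp only [Set.mem_insert_iff, Set.mem_singleton_iff] at hP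
        rcases hP with rfl | rfl | rfl | rfl <;> simp_all)
    · exact pair_bound u v A B C D C A (by
        intro P hP hc
        simp only [Set.mem_insert_iff, Set.mem_singleton_iff] at hP
        rcases hP with rfl | rfl | rfl | rfl <;> simp_all)
    · exact pair_bound u v A B C D D A (by
        intro P hP hc
        simp only [Set.mem_insert_iff, Set.mem_singleton_iff] at hP
        rcases hP with rfl | rfl | rfl | rfl <;> simp_all)
    · exact pair_bound u v A B C D A B (by
        intro P hP hc
        simp only [Set.mem_insert_iff, Set.mem_singleton_iff] at hP
        rcases hP with rfl | rfl | rfl | rfl <;> simp_all)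
  omega

def fTup (t : Tup) : Sym2 (Sym2 (ℤ × ℤ)) := s(s(t.1, t.2.1), s(t.2.2.1, t.2.2.2))

lemma Zi_subset (i u v : ℕ) (hi : 3 ≤ i) :
    Zi i u v ⊆ ((bigFS u v).image fTup : Finset _) := by
  rintro z ⟨A, B, C, D, rfl, hzp, hcc⟩
  have hbb := hzp.2.2.2
  obtain ⟨hmin1, hmax1, hmin2, hmax2⟩ := hbb
  have hA : A ∈ boxFS u v := mem_boxFS (by omega) (by omega) (by omega) (by omega)
  have hB : B ∈ boxFS u v := mem_boxFS (by omega) (by omega) (by omega) (by omega)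
  have hC : C ∈ boxFS u v := mem_boxFS (by omega) (by omega) (by omega) (by omega)
  have hD : D ∈ boxFS u v := mem_boxFS (by omega) (by omega) (by omega) (by omega)
  have h3 : 3 ≤ cornerCount u v A B C D := by omega
  refine Finset.mem_coe.mpr (Finset.mem_image.mpr ⟨(A, B, C, D), ?_, rfl⟩)
  unfold bigFS
  rcases three_of_four u v A B C D h3 with ⟨c1, c2, c3⟩ | ⟨c1, c2, c3⟩ | ⟨c1, c2, c3⟩ | ⟨c1, c2, c3⟩
  · exact Finset.mem_union_left _ (Finset.mem_union_left _ (Finset.mem_union_left _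
      (Finset.mem_product.mpr ⟨hA, Finset.mem_product.mpr ⟨mem_cornerFS c1,
        Finset.mem_product.mpr ⟨mem_cornerFS c2, mem_cornerFS c3⟩⟩⟩)))
  · exact Finset.mem_union_left _ (Finset.mem_union_left _ (Finset.mem_union_right _
      (Finset.mem_product.mpr ⟨mem_cornerFS c1, Finset.mem_product.mpr ⟨hB,
        Finset.mem_product.mpr ⟨mem_cornerFS c2, mem_cornerFS c3⟩⟩⟩)))
  · exact Finset.mem_union_left _ (Finset.mem_union_right _
      (Finset.mem_product.mpr ⟨mem_cornerFS c1, Finset.mem_product.mpr ⟨mem_cornerFS c2,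
        Finset.mem_product.mpr ⟨hC, mem_cornerFS c3⟩⟩⟩))
  · exact Finset.mem_union_right _
      (Finset.mem_product.mpr ⟨mem_cornerFS c1, Finset.mem_product.mpr ⟨mem_cornerFS c2,
        Finset.mem_product.mpr ⟨mem_cornerFS c3, hD⟩⟩⟩)

lemma Zi_card (i u v : ℕ) (hi : 3 ≤ i) :
    (Zi i u v).ncard ≤ 256 * ((u + 1) * (v + 1)) := by
  have h := Set.ncard_le_ncard (Zi_subset i u v hi) ((bigFS u v).image fTup).finite_toSet
  rw [Set.ncard_coe_finset] at h
  exact h.trans ((Finset.card_image_le).trans (bigFS_card u v))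

end Z34Aux

/-- |Z₃(u,v)| + |Z₄(u,v)| ≤ K·uv. -/
theorem Z3_add_Z4_bound :
    ∃ K : ℝ, ∀ u v : ℕ, 0 < u → 0 < v →
      ((Zi 3 u v).ncard : ℝ) + ((Zi 4 u v).ncard : ℝ) ≤ K * (u : ℝ) * (v : ℝ) := by
  refine ⟨2048, fun u v hu hv => ?_⟩
  have h3 := Z34Aux.Zi_card 3 u v (by norm_num)
  have h4 := Z34Aux.Zi_card 4 u v (by norm_num)
  have hb : (u + 1) * (v + 1) ≤ 4 * (u * v) := by
    have h1 : u + 1 ≤ 2 * u := by omega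
    have h2 : v + 1 ≤ 2 * v := by omega
    calc (u + 1) * (v + 1) ≤ (2 * u) * (2 * v) := Nat.mul_le_mul h1 h2
      _ = 4 * (u * v) := by ring
  have key : (Zi 3 u v).ncard + (Zi 4 u v).ncard ≤ 2048 * (u * v) := by
    have := h3.trans (Nat.mul_le_mul_left 256 hb)
    have := h4.trans (Nat.mul_le_mul_left 256 hb)
    omega
  have := (Nat.cast_le (α := ℝ)).mpr key
  push_cast at this
  linarith
end

section
/- There is an absolute constant K such that for all positive integers u, v, |Z₂ᵃ(u,v)| ≤ K·(u²v + uv²). -/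
open scoped Real

namespace Z2aAux

noncomputable def gridF (u v : ℕ) : Finset (ℤ × ℤ) := Finset.Icc (0:ℤ) (u:ℤ) ×ˢ Finset.Icc (0:ℤ) (v:ℤ)

def cornF (u v : ℕ) : Finset (ℤ × ℤ) := ({0, (u:ℤ)} : Finset ℤ) ×ˢ ({0, (v:ℤ)} : Finset ℤ)

noncomputable def bdF (u v : ℕ) : Finset (ℤ × ℤ) :=
  (({0,(u:ℤ)} : Finset ℤ) ×ˢ Finset.Icc (0:ℤ) (v:ℤ)) ∪
  (Finset.Icc (0:ℤ) (u:ℤ) ×ˢ ({0,(v:ℤ)} : Finset ℤ))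

noncomputable def domF (u v : ℕ) : Finset ((ℤ×ℤ)×(ℤ×ℤ)×(ℤ×ℤ)×(ℤ×ℤ)) :=
  cornF u v ×ˢ cornF u v ×ˢ bdF u v ×ˢ gridF u v

def fone (t : (ℤ×ℤ)×(ℤ×ℤ)×(ℤ×ℤ)×(ℤ×ℤ)) : Sym2 (Sym2 (ℤ×ℤ)) :=
  s(s(t.1, t.2.1), s(t.2.2.1, t.2.2.2))

def ftwo (t : (ℤ×ℤ)×(ℤ×ℤ)×(ℤ×ℤ)×(ℤ×ℤ)) : Sym2 (Sym2 (ℤ×ℤ)) :=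
  s(s(t.1, t.2.2.1), s(t.2.1, t.2.2.2))

noncomputable def Sfin (u v : ℕ) : Finset (Sym2 (Sym2 (ℤ×ℤ))) := (domF u v).image fone ∪ (domF u v).image ftwo

set_option linter.unreachableTactic false in
set_option linter.unusedTactic false in
lemma cover_lemma (A B C D X Y W : ℤ×ℤ)
    (hX : X = A ∨ X = B ∨ X = C ∨ X = D) (hY : Y = A ∨ Y = B ∨ Y = C ∨ Y = D)
    (hW : W = A ∨ W = B ∨ W = C ∨ W = D)
    (hXY : X ≠ Y) (hXW : X ≠ W) (hYW : Y ≠ W) :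
    ∃ g, (g = A ∨ g = B ∨ g = C ∨ g = D) ∧
      (s(s(A,B),s(C,D)) = s(s(X,Y), s(W,g)) ∨
       s(s(A,B),s(C,D)) = s(s(X,W), s(Y,g)) ∨
       s(s(A,B),s(C,D)) = s(s(X,g), s(Y,W))) := by
  rcases hX with rfl|rfl|rfl|rfl <;> rcases hY with rfl|rfl|rfl|rfl <;>
    rcases hW with rfl|rfl|rfl|rfl <;>
    first
      | exact absurd rfl hXY
      | exact absurd rfl hXW
      | exact absurd rfl hYW
      | (refine ⟨A, by tauto, ?_⟩; simp [Sym2.eq_iff] <;> tauto)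
      | (refine ⟨B, by tauto, ?_⟩; simp [Sym2.eq_iff] <;> tauto)
      | (refine ⟨C, by tauto, ?_⟩; simp [Sym2.eq_iff] <;> tauto)
      | (refine ⟨D, by tauto, ?_⟩; simp [Sym2.eq_iff] <;> tauto)

lemma sup_attain {a b c d m : ℤ} (h : a ⊔ b ⊔ (c ⊔ d) = m) :
    a = m ∨ b = m ∨ c = m ∨ d = m := by omega

lemma inf_attain {a b c d : ℤ} (h : a ⊓ b ⊓ (c ⊓ d) = 0) :
    a = 0 ∨ b = 0 ∨ c = 0 ∨ d = 0 := by omega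

lemma sup_bound {a b c d m : ℤ} (h : a ⊔ b ⊔ (c ⊔ d) = m) :
    a ≤ m ∧ b ≤ m ∧ c ≤ m ∧ d ≤ m := by omega

lemma inf_bound {a b c d : ℤ} (h : a ⊓ b ⊓ (c ⊓ d) = 0) :
    0 ≤ a ∧ 0 ≤ b ∧ 0 ≤ c ∧ 0 ≤ d := by omega

lemma card_bound (u v : ℕ) :
    (Sfin u v).card ≤ 2*(4*(4*((2*(v+1)+2*(u+1))*((u+1)*(v+1))))) := by
  have hic : ∀ n : ℕ, (Finset.Icc (0:ℤ) (n:ℤ)).card = n + 1 := by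
    intro n; rw [Int.card_Icc]; omega
  have hpair : ∀ n : ℕ, ({0, (n:ℤ)} : Finset ℤ).card ≤ 2 :=
    fun n => le_trans (Finset.card_insert_le _ _) (by simp)
  have hcorn : (cornF u v).card ≤ 4 := by
    rw [cornF, Finset.card_product]
    exact le_trans (Nat.mul_le_mul (hpair u) (hpair v)) (by norm_num)
  have hbd : (bdF u v).card ≤ 2*(v+1)+2*(u+1) := by
    refine le_trans (Finset.card_union_le _ _) ?_
    rw [Finset.card_product, Finset.card_product, hic, hic]
    refine Nat.add_le_add ?_ ?_
    · exact Nat.mul_le_mul (hpair u) le_rfl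
    · exact le_trans (Nat.mul_le_mul le_rfl (hpair v)) (by omega)
  have hgrid : (gridF u v).card = (u+1)*(v+1) := by
    rw [gridF, Finset.card_product, hic, hic]
  have hdom : (domF u v).card ≤ 4*(4*((2*(v+1)+2*(u+1))*((u+1)*(v+1)))) := by
    rw [domF, Finset.card_product, Finset.card_product, Finset.card_product, hgrid]
    exact Nat.mul_le_mul hcorn (Nat.mul_le_mul hcorn (Nat.mul_le_mul hbd le_rfl))
  have himg : (Sfin u v).card ≤ (domF u v).card + (domF u v).card :=
    le_trans (Finset.card_union_le _ _)
      (Nat.add_le_add (Finset.card_image_le) (Finset.card_image_le))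
  omega

end Z2aAux

set_option maxHeartbeats 2000000 in
/-- |Z₂ᵃ(u,v)| ≤ K·(u²v + uv²). -/
theorem Z2a_bound :
    ∃ K : ℝ, ∀ u v : ℕ, 0 < u → 0 < v →
      ((Z2a u v).ncard : ℝ) ≤ K * ((u : ℝ) ^ 2 * (v : ℝ) + (u : ℝ) * (v : ℝ) ^ 2) := by
  refine ⟨1000, fun u v hu hv => ?_⟩
  have hsub : Z2a u v ⊆ ↑(Z2aAux.Sfin u v) := by
    rintro z ⟨A,B,C,D, rfl, ⟨hAB, hCD, hconv, hminx, hmaxx, hminy, hmaxy⟩, hcc,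
      X, Y, hXm, hYm, hXY, hXc, hYc, hadj⟩
    clear hcc hconv hAB hCD
    simp only [Set.mem_insert_iff, Set.mem_singleton_iff] at hXm hYm
    obtain ⟨hXc1, hXc2⟩ := hXc
    have hbxl := Z2aAux.inf_bound hminx
    have hbxu := Z2aAux.sup_bound hmaxx
    have hbyl := Z2aAux.inf_bound hminy
    have hbyu := Z2aAux.sup_bound hmaxy
    have hmu := Z2aAux.sup_attain hmaxx
    have hm0 := Z2aAux.inf_attain hminx
    have hmv := Z2aAux.sup_attain hmaxy
    have hm0' := Z2aAux.inf_attain hminy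
    clear hminx hmaxx hminy hmaxy
    have hexu : ∃ W : ℤ×ℤ, (W=A∨W=B∨W=C∨W=D) ∧ W.1 = (u:ℤ) := by
      rcases hmu with he|he|he|he
      exacts [⟨A, Or.inl rfl, he⟩, ⟨B, Or.inr (Or.inl rfl), he⟩,
        ⟨C, Or.inr (Or.inr (Or.inl rfl)), he⟩, ⟨D, Or.inr (Or.inr (Or.inr rfl)), he⟩]
    have hexu0 : ∃ W : ℤ×ℤ, (W=A∨W=B∨W=C∨W=D) ∧ W.1 = 0 := by
      rcases hm0 with he|he|he|he
      exacts [⟨A, Or.inl rfl, he⟩, ⟨B, Or.inr (Or.inl rfl), he⟩,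
        ⟨C, Or.inr (Or.inr (Or.inl rfl)), he⟩, ⟨D, Or.inr (Or.inr (Or.inr rfl)), he⟩]
    have hexv : ∃ W : ℤ×ℤ, (W=A∨W=B∨W=C∨W=D) ∧ W.2 = (v:ℤ) := by
      rcases hmv with he|he|he|he
      exacts [⟨A, Or.inl rfl, he⟩, ⟨B, Or.inr (Or.inl rfl), he⟩,
        ⟨C, Or.inr (Or.inr (Or.inl rfl)), he⟩, ⟨D, Or.inr (Or.inr (Or.inr rfl)), he⟩]
    have hexv0 : ∃ W : ℤ×ℤ, (W=A∨W=B∨W=C∨W=D) ∧ W.2 = 0 := by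
      rcases hm0' with he|he|he|he
      exacts [⟨A, Or.inl rfl, he⟩, ⟨B, Or.inr (Or.inl rfl), he⟩,
        ⟨C, Or.inr (Or.inr (Or.inl rfl)), he⟩, ⟨D, Or.inr (Or.inr (Or.inr rfl)), he⟩]
    have hkey : ∃ W : ℤ×ℤ, (W=A∨W=B∨W=C∨W=D) ∧
        (W.1=0∨W.1=(u:ℤ)∨W.2=0∨W.2=(v:ℤ)) ∧ X ≠ W ∧ Y ≠ W := by
      rcases hadj with hsh|hsh
      · rcases hXc1 with h0|h0
        · obtain ⟨W,hm,hc⟩ := hexu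
          exact ⟨W, hm, Or.inr (Or.inl hc), fun h => by rw [← h] at hc; omega,
            fun h => by rw [← h] at hc; omega⟩
        · obtain ⟨W,hm,hc⟩ := hexu0
          exact ⟨W, hm, Or.inl hc, fun h => by rw [← h] at hc; omega,
            fun h => by rw [← h] at hc; omega⟩
      · rcases hXc2 with h0|h0
        · obtain ⟨W,hm,hc⟩ := hexv
          exact ⟨W, hm, Or.inr (Or.inr (Or.inr hc)), fun h => by rw [← h] at hc; omega,
            fun h => by rw [← h] at hc; omega⟩
        · obtain ⟨W,hm,hc⟩ := hexv0
          exact ⟨W, hm, Or.inr (Or.inr (Or.inl hc)), fun h => by rw [← h] at hc; omega,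
            fun h => by rw [← h] at hc; omega⟩
    obtain ⟨W, hWm, hWbd, hXW, hYW⟩ := hkey
    obtain ⟨g, hgm, heq⟩ := Z2aAux.cover_lemma A B C D X Y W hXm hYm hWm hXY hXW hYW
    have hXF : X ∈ Z2aAux.cornF u v := by
      simp only [Z2aAux.cornF, Finset.mem_product, Finset.mem_insert, Finset.mem_singleton]
      exact ⟨hXc1, hXc2⟩
    have hYF : Y ∈ Z2aAux.cornF u v := by
      simp only [Z2aAux.cornF, Finset.mem_product, Finset.mem_insert, Finset.mem_singleton]
      exact hYc
    have hWF : W ∈ Z2aAux.bdF u v := by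
      simp only [Z2aAux.bdF, Finset.mem_union, Finset.mem_product, Finset.mem_insert,
        Finset.mem_singleton, Finset.mem_Icc]
      rcases hWm with rfl|rfl|rfl|rfl <;> omega
    have hgF : g ∈ Z2aAux.gridF u v := by
      simp only [Z2aAux.gridF, Finset.mem_product, Finset.mem_Icc]
      rcases hgm with rfl|rfl|rfl|rfl <;> omega
    have hdom1 : ((X,Y,W,g) : (ℤ×ℤ)×(ℤ×ℤ)×(ℤ×ℤ)×(ℤ×ℤ)) ∈ Z2aAux.domF u v := by
      simp only [Z2aAux.domF, Finset.mem_product]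
      exact ⟨hXF, hYF, hWF, hgF⟩
    have hdom2 : ((Y,X,W,g) : (ℤ×ℤ)×(ℤ×ℤ)×(ℤ×ℤ)×(ℤ×ℤ)) ∈ Z2aAux.domF u v := by
      simp only [Z2aAux.domF, Finset.mem_product]
      exact ⟨hYF, hXF, hWF, hgF⟩
    rcases heq with h|h|h
    · exact Finset.mem_coe.2 (Finset.mem_union_left _
        (Finset.mem_image.2 ⟨_, hdom1, h.symm⟩))
    · exact Finset.mem_coe.2 (Finset.mem_union_right _
        (Finset.mem_image.2 ⟨_, hdom1, h.symm⟩))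
    · exact Finset.mem_coe.2 (Finset.mem_union_right _
        (Finset.mem_image.2 ⟨_, hdom2, by rw [h]; exact Sym2.eq_swap⟩))
  have h1 : (Z2a u v).ncard ≤ (Z2aAux.Sfin u v).card := by
    rw [← Set.ncard_coe_finset]
    exact Set.ncard_le_ncard hsub (Finset.finite_toSet _)
  have h2 := Z2aAux.card_bound u v
  have h3 : 2*(4*(4*((2*(v+1)+2*(u+1))*((u+1)*(v+1))))) ≤ 1000*(u^2*v+u*v^2) := by
    nlinarith [hu, hv, Nat.mul_le_mul hu hv]
  calc ((Z2a u v).ncard : ℝ) ≤ ((1000*(u^2*v+u*v^2) : ℕ) : ℝ) := by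
        exact_mod_cast le_trans h1 (le_trans h2 h3)
    _ = 1000 * ((u:ℝ)^2*(v:ℝ) + (u:ℝ)*(v:ℝ)^2) := by push_cast; ring
end

section
/- Let A, B, C, D be points in the plane ℝ² with A ≠ B and C ≠ D. The segments AB and CD are in convex position if and only if the points A, B, C, D are in general position (no three of them are collinear), det(B−A, C−A) and det(B−A, D−A) have the same (nonzero) sign, and det(D−C, A−C) and det(D−C, B−C) have the same (nonzero) sign (i.e., the triangle ABD has the same orientation as ABC, and the triangle CDA has the same orientation as CDB). -/
open scoped Real

/-- Pure sign-logic core of Statement 11. -/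
lemma sign_key (p q r s : ℝ) :
    ((0 < p ∧ 0 < s ∧ 0 < r ∧ 0 < q) ∨ (p < 0 ∧ s < 0 ∧ r < 0 ∧ q < 0)) ∨
    ((0 < q ∧ 0 < -s ∧ 0 < -r ∧ 0 < p) ∨ (q < 0 ∧ -s < 0 ∧ -r < 0 ∧ p < 0)) ↔
      (p ≠ 0 ∧ q ≠ 0 ∧ r ≠ 0 ∧ s ≠ 0) ∧ 0 < p * q ∧ 0 < r * s := by
  constructor
  · rintro ((⟨h1, h2, h3, h4⟩ | ⟨h1, h2, h3, h4⟩) | (⟨h1, h2, h3, h4⟩ | ⟨h1, h2, h3, h4⟩)) <;>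
      refine ⟨⟨?_, ?_, ?_, ?_⟩, ?_, ?_⟩ <;> nlinarith
  · rintro ⟨⟨hp, hq, hr, hs⟩, hpq, hrs⟩
    rcases hp.lt_or_gt with hp' | hp' <;> rcases hr.lt_or_gt with hr' | hr'
    · exact Or.inl (Or.inr ⟨hp', by nlinarith, hr', by nlinarith⟩)
    · exact Or.inr (Or.inr ⟨by nlinarith, by nlinarith, by nlinarith, hp'⟩)
    · exact Or.inr (Or.inl ⟨by nlinarith, by nlinarith, by nlinarith, hp'⟩)
    · exact Or.inl (Or.inl ⟨hp', by nlinarith, hr', by nlinarith⟩)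

/-- AB and CD are in convex position iff A, B, C, D are in general position,
the triangles ABC and ABD have the same orientation, and CDA and CDB have the same
orientation. -/
theorem convexPos_iff_orientations (A B C D : ℝ × ℝ) (hAB : A ≠ B) (hCD : C ≠ D) :
    ConvexPosR A B C D ↔
      (detR (B - A) (C - A) ≠ 0 ∧ detR (B - A) (D - A) ≠ 0 ∧
        detR (C - A) (D - A) ≠ 0 ∧ detR (C - B) (D - B) ≠ 0) ∧
      0 < detR (B - A) (C - A) * detR (B - A) (D - A) ∧
      0 < detR (D - C) (A - C) * detR (D - C) (B - C) := by
  have e1 : detR (B - A) (C - B) = detR (B - A) (C - A) := by simp [detR]; ring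
  have e2 : detR (C - B) (D - C) = detR (C - B) (D - B) := by simp [detR]; ring
  have e3 : detR (D - C) (A - D) = detR (C - A) (D - A) := by simp [detR]; ring
  have e4 : detR (A - D) (B - A) = detR (B - A) (D - A) := by simp [detR]; ring
  have e5 : detR (B - A) (D - B) = detR (B - A) (D - A) := by simp [detR]; ring
  have e6 : detR (D - B) (C - D) = -detR (C - B) (D - B) := by simp [detR]; ring
  have e7 : detR (C - D) (A - C) = -detR (C - A) (D - A) := by simp [detR]; ring
  have e8 : detR (A - C) (B - A) = detR (B - A) (C - A) := by simp [detR]; ring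
  have e9 : detR (D - C) (A - C) = detR (C - A) (D - A) := by simp [detR]; ring
  have e10 : detR (D - C) (B - C) = detR (C - B) (D - B) := by simp [detR]; ring
  rw [ConvexPosR, QuadConvR, QuadConvR, e1, e2, e3, e4, e5, e6, e7, e8, e9, e10]
  exact sign_key _ _ _ _
end
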